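/- arXiv:1810.04125 — 5 statements merged into one kernel-verified Lean document; each statement's English description precedes it below -/
import Mathlib

section
/- Let σ₁ ≥ ... ≥ σ_r > 0, set ‖A‖_F² = σ₁²+...+σ_r², and let X̄_d = (1/d)Σ_{i=1}^d X_i where X_i are i.i.d. copies of X = Σ_k σ_k² ξ_k² with ξ_k i.i.d. N(0,1). Then for every τ > 1, P[X̄_d ≥ ‖A‖_F² τ] ≤ exp(−dτ/2) · ‖A‖_F^{dr} · ∏_{k=1}^r (‖A‖_F² − σ_k²)^{-d/2}. -/
open MeasureTheory ProbabilityTheory Real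
open scoped NNReal ENNReal

lemma aux_pdf_smul {b : ℝ} :
    (fun x => (Real.toNNReal (gaussianPDFReal 0 1 x) : ℝ≥0) • Real.exp (b * x ^ 2))
      = fun x : ℝ => (Real.sqrt (2 * π))⁻¹ * Real.exp (-(1/2 - b) * x ^ 2) := by
  funext x
  rw [NNReal.smul_def, Real.coe_toNNReal _ (gaussianPDFReal_nonneg _ _ _)]
  simp only [gaussianPDFReal, NNReal.coe_one, mul_one, sub_zero]
  rw [smul_eq_mul, mul_assoc, ← Real.exp_add]
  congr 1
  ring

lemma aux_integrable_exp_mul_sq_gaussian {b : ℝ} (hb : b < 1/2) :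
    Integrable (fun x => Real.exp (b * x ^ 2)) (gaussianReal 0 1) := by
  rw [gaussianReal_of_var_ne_zero _ one_ne_zero]
  have hpdf : gaussianPDF 0 1 = fun x => ((Real.toNNReal (gaussianPDFReal 0 1 x) : ℝ≥0) : ℝ≥0∞) :=
    rfl
  rw [hpdf, integrable_withDensity_iff_integrable_smul
    ((measurable_gaussianPDFReal 0 1).real_toNNReal)]
  rw [aux_pdf_smul]
  exact (integrable_exp_neg_mul_sq (by linarith)).const_mul _

lemma aux_integral_exp_mul_sq_gaussian {b : ℝ} (hb : b < 1/2) :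
    ∫ x, Real.exp (b * x ^ 2) ∂(gaussianReal 0 1) = (1 - 2*b) ^ (-(1:ℝ)/2) := by
  rw [gaussianReal_of_var_ne_zero _ one_ne_zero]
  have hpdf : gaussianPDF 0 1 = fun x => ((Real.toNNReal (gaussianPDFReal 0 1 x) : ℝ≥0) : ℝ≥0∞) :=
    rfl
  rw [hpdf, integral_withDensity_eq_integral_smul
    ((measurable_gaussianPDFReal 0 1).real_toNNReal)]
  rw [aux_pdf_smul, integral_const_mul, integral_gaussian]
  have hc : (0:ℝ) < 1 - 2*b := by linarith
  have h2pi : (0:ℝ) < 2 * π := by positivity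
  have h : π / (1/2 - b) = (2*π) / (1 - 2*b) := by
    rw [div_eq_div_iff (by linarith) (by linarith)]; ring
  rw [h, Real.sqrt_div h2pi.le,
    show (-(1:ℝ)/2) = -(1/2:ℝ) by norm_num, Real.rpow_neg hc.le, ← Real.sqrt_eq_rpow]
  have h1 : Real.sqrt (2*π) ≠ 0 := by positivity
  have h2 : Real.sqrt (1 - 2*b) ≠ 0 := by positivity
  field_simp

lemma aux_mgf {Ω : Type*} [MeasurableSpace Ω] (μ : Measure Ω) [IsProbabilityMeasure μ]
    {f : Ω → ℝ} (hf : Measurable f) (hmap : Measure.map f μ = gaussianReal 0 1)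
    {t c : ℝ} (htc : t * c < 1/2) :
    mgf (fun ω => c * f ω ^ 2) μ t = (1 - 2*(t*c)) ^ (-(1:ℝ)/2)
      ∧ Integrable (fun ω => Real.exp (t * (c * f ω ^ 2))) μ := by
  have hint : Integrable (fun x => Real.exp ((t*c) * x ^ 2)) (Measure.map f μ) := by
    rw [hmap]; exact aux_integrable_exp_mul_sq_gaussian htc
  have hmeasg : Measurable fun x : ℝ => Real.exp ((t*c) * x ^ 2) := by measurability
  have hint2 : Integrable (fun ω => Real.exp (t * (c * f ω ^ 2))) μ := by
    have := (integrable_map_measure hmeasg.aestronglyMeasurable hf.aemeasurable).mp hint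
    simpa [Function.comp_def, mul_assoc] using this
  refine ⟨?_, hint2⟩
  rw [mgf]
  have : ∫ ω, Real.exp (t * (c * f ω ^ 2)) ∂μ
      = ∫ x, Real.exp ((t*c) * x ^ 2) ∂(Measure.map f μ) := by
    rw [integral_map hf.aemeasurable hmeasg.aestronglyMeasurable]
    simp only [mul_assoc]
  simp only [Pi.mul_apply]
  rw [this, hmap, aux_integral_exp_mul_sq_gaussian htc]

/-- upper-tail probabilistic bound: with `‖A‖_F² = σ₁²+⋯+σ_r²` and `X̄_d`
the average of `d` i.i.d. copies of `X = Σ_k σ_k² ξ_k²`, for every `τ > 1`,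
`P[X̄_d ≥ ‖A‖_F² τ] ≤ exp(−dτ/2) ‖A‖_F^{dr} ∏_k (‖A‖_F² − σ_k²)^{-d/2}`. -/
theorem stmt_6 {Ω : Type*} [MeasurableSpace Ω]
    (μ : Measure Ω) [IsProbabilityMeasure μ]
    {r d : ℕ} (hr : 2 ≤ r) (hd : 0 < d)
    (σ : Fin r → ℝ) (hσpos : ∀ k, 0 < σ k) (hσmono : Antitone σ)
    (ξ : Ω → Fin d × Fin r → ℝ)
    (hmeas : ∀ p, Measurable fun ω => ξ ω p)
    (hgauss : ∀ p, Measure.map (fun ω => ξ ω p) μ = gaussianReal 0 1)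
    (hindep : iIndepFun (fun p ω => ξ ω p) μ)
    (F2 : ℝ) (hF2 : F2 = ∑ k, σ k ^ 2)
    (τ : ℝ) (hτ : 1 < τ) :
    (μ {ω | F2 * τ ≤ (d : ℝ)⁻¹ * ∑ i : Fin d, ∑ k, σ k ^ 2 * ξ ω (i, k) ^ 2}).toReal
      ≤ Real.exp (-(d * τ) / 2) * Real.sqrt F2 ^ (d * r) *
        ∏ k, (F2 - σ k ^ 2) ^ (-(d : ℝ) / 2) := by
  have hrpos : 0 < r := by omega
  have hdR : (0:ℝ) < d := by exact_mod_cast hd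
  have hσlt : ∀ k, σ k ^ 2 < F2 := by
    intro k
    have : Nontrivial (Fin r) := Fin.nontrivial_iff_two_le.mpr hr
    obtain ⟨j, hj⟩ := exists_ne k
    rw [hF2]
    exact Finset.single_lt_sum hj (Finset.mem_univ k) (Finset.mem_univ j)
      (pow_pos (hσpos j) 2) (fun i _ _ => sq_nonneg (σ i))
  have hF2pos : (0:ℝ) < F2 := lt_trans (pow_pos (hσpos ⟨0, hrpos⟩) 2) (hσlt ⟨0, hrpos⟩)
  set t : ℝ := (2*F2)⁻¹ with ht_def
  have htpos : 0 < t := by positivity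
  have htc : ∀ k : Fin r, t * σ k ^ 2 < 1/2 := by
    intro k
    rw [ht_def]
    rw [inv_mul_lt_iff₀ (by positivity)]
    nlinarith [hσlt k]
  set X : (Fin d × Fin r) → Ω → ℝ := fun p ω => σ p.2 ^ 2 * ξ ω p ^ 2 with hX_def
  have hXmeas : ∀ p, Measurable (X p) := fun p => ((hmeas p).pow_const 2).const_mul _
  have hXindep : iIndepFun X μ :=
    hindep.comp (fun p x => σ p.2 ^ 2 * x ^ 2)
      (fun p => (measurable_id.pow_const 2).const_mul _)
  have hXint : ∀ p : Fin d × Fin r, Integrable (fun ω => Real.exp (t * X p ω)) μ :=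
    fun p => (aux_mgf μ (hmeas p) (hgauss p) (htc p.2)).2
  have hXmgf : ∀ p : Fin d × Fin r,
      mgf (X p) μ t = (1 - 2*(t * σ p.2 ^ 2)) ^ (-(1:ℝ)/2) :=
    fun p => (aux_mgf μ (hmeas p) (hgauss p) (htc p.2)).1
  have hset : {ω | F2 * τ ≤ (d : ℝ)⁻¹ * ∑ i : Fin d, ∑ k, σ k ^ 2 * ξ ω (i, k) ^ 2}
      = {ω | F2 * τ * d ≤ (∑ p : Fin d × Fin r, X p) ω} := by
    ext ω
    simp only [Set.mem_setOf_eq, Finset.sum_apply, hX_def]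
    rw [Fintype.sum_prod_type]
    rw [inv_mul_eq_div, le_div_iff₀ hdR]
  rw [hset]
  have hchernoff := measure_ge_le_exp_mul_mgf (μ := μ) (X := ∑ p : Fin d × Fin r, X p)
    (F2 * τ * d) htpos.le
    (hXindep.integrable_exp_mul_sum hXmeas (fun p _ => hXint p))
  rw [hXindep.mgf_sum hXmeas] at hchernoff
  refine hchernoff.trans (le_of_eq ?_)
  have hexp : -t * (F2 * τ * d) = -(d * τ) / 2 := by
    rw [ht_def]; field_simp
  have hprod : ∏ p : Fin d × Fin r, mgf (X p) μ t
      = Real.sqrt F2 ^ (d * r) * ∏ k, (F2 - σ k ^ 2) ^ (-(d : ℝ) / 2) := by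
    simp only [hXmgf]
    rw [Fintype.prod_prod_type]
    have hterm : ∀ k : Fin r, (1 - 2*(t * σ k ^ 2)) ^ (-(1:ℝ)/2)
        = Real.sqrt F2 * (F2 - σ k ^ 2) ^ (-(1:ℝ)/2) := by
      intro k
      have h1 : 1 - 2*(t * σ k ^ 2) = (F2 - σ k ^ 2) / F2 := by
        rw [ht_def]; field_simp
      have hpos : (0:ℝ) < F2 - σ k ^ 2 := by linarith [hσlt k]
      rw [h1, Real.div_rpow hpos.le hF2pos.le, div_eq_mul_inv, ← Real.rpow_neg hF2pos.le,
        mul_comm]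
      congr 1
      rw [show -(-(1:ℝ)/2) = (1/2 : ℝ) by norm_num, ← Real.sqrt_eq_rpow]
    simp only [hterm]
    rw [Finset.prod_const, Finset.card_univ, Fintype.card_fin, Finset.prod_mul_distrib,
      Finset.prod_const, Finset.card_univ, Fintype.card_fin, mul_pow, ← pow_mul,
      mul_comm r d]
    congr 1
    rw [← Finset.prod_pow]
    refine Finset.prod_congr rfl fun k _ => ?_
    have hpos : (0:ℝ) < F2 - σ k ^ 2 := by linarith [hσlt k]
    rw [← Real.rpow_natCast ((F2 - σ k ^ 2) ^ (-(1:ℝ)/2)) d, ← Real.rpow_mul hpos.le]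
    congr 1
    ring
  rw [hexp, hprod, mul_assoc]
end

section
/- Let σ₁ ≥ ... ≥ σ_r > 0, set ‖A‖_F² = σ₁²+...+σ_r², and let X̄_d be the average of d i.i.d. copies of X = Σ_k σ_k² ξ_k² with ξ_k i.i.d. N(0,1). Then for every τ ∈ [0,1), P[X̄_d ≤ ‖A‖_F² τ] ≤ exp(dτ/2) · ‖A‖_F^{dr} · ∏_{k=1}^r (‖A‖_F² + σ_k²)^{-d/2}. -/
open MeasureTheory ProbabilityTheory Real
open scoped ENNReal NNReal

lemma gauss_sq_exp (a : ℝ) (ha : 0 ≤ a) :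
    ∫ x : ℝ, Real.exp (-a * x ^ 2) ∂(gaussianReal 0 1) = (Real.sqrt (1 + 2 * a))⁻¹ := by
  rw [gaussianReal_of_var_ne_zero 0 one_ne_zero]
  have hmeas : Measurable fun x => (gaussianPDFReal 0 1 x).toNNReal :=
    (measurable_gaussianPDFReal 0 1).real_toNNReal
  have h1 : (volume.withDensity (gaussianPDF 0 1)) =
      volume.withDensity (fun x => ((gaussianPDFReal 0 1 x).toNNReal : ℝ≥0∞)) := rfl
  rw [h1, integral_withDensity_eq_integral_smul hmeas]
  have h2 : ∀ x : ℝ, (gaussianPDFReal 0 1 x).toNNReal • Real.exp (-a * x ^ 2)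
      = (√(2 * π))⁻¹ * Real.exp (-(a + 1/2) * x ^ 2) := by
    intro x
    rw [NNReal.smul_def, Real.coe_toNNReal _ (gaussianPDFReal_nonneg 0 1 x)]
    simp only [gaussianPDFReal, NNReal.coe_one, mul_one, sub_zero, smul_eq_mul]
    rw [mul_assoc, ← Real.exp_add]
    ring_nf
  simp_rw [h2]
  rw [integral_const_mul, integral_gaussian]
  have hπ : (0:ℝ) < π := Real.pi_pos
  have h3 : √(π / (a + 1/2)) = √π / √(a + 1/2) := Real.sqrt_div hπ.le _
  have h4 : √(2 * π) = √2 * √π := Real.sqrt_mul (by norm_num) _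
  have h5 : √(1 + 2 * a) = √2 * √(a + 1/2) := by
    rw [← Real.sqrt_mul (by norm_num : (0:ℝ) ≤ 2)]
    ring_nf
  have hsπ : (0:ℝ) < √π := Real.sqrt_pos.mpr hπ
  have hs2 : (0:ℝ) < √2 := by positivity
  have hsa : (0:ℝ) < √(a + 1/2) := Real.sqrt_pos.mpr (by linarith)
  rw [h3, h4, h5]
  field_simp

/-- lower-tail probabilistic bound: with `‖A‖_F² = σ₁²+⋯+σ_r²` and `X̄_d`
the average of `d` i.i.d. copies of `X = Σ_k σ_k² ξ_k²`, for every `τ ∈ [0,1)`,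
`P[X̄_d ≤ ‖A‖_F² τ] ≤ exp(dτ/2) ‖A‖_F^{dr} ∏_k (‖A‖_F² + σ_k²)^{-d/2}`. -/
theorem stmt_7 {Ω : Type*} [MeasurableSpace Ω]
    (μ : Measure Ω) [IsProbabilityMeasure μ]
    {r d : ℕ} (hr : 0 < r) (hd : 0 < d)
    (σ : Fin r → ℝ) (hσpos : ∀ k, 0 < σ k) (hσmono : Antitone σ)
    (ξ : Ω → Fin d × Fin r → ℝ)
    (hmeas : ∀ p, Measurable fun ω => ξ ω p)
    (hgauss : ∀ p, Measure.map (fun ω => ξ ω p) μ = gaussianReal 0 1)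
    (hindep : iIndepFun (fun p ω => ξ ω p) μ)
    (F2 : ℝ) (hF2 : F2 = ∑ k, σ k ^ 2)
    (τ : ℝ) (hτ0 : 0 ≤ τ) (hτ1 : τ < 1) :
    (μ {ω | (d : ℝ)⁻¹ * ∑ i : Fin d, ∑ k, σ k ^ 2 * ξ ω (i, k) ^ 2 ≤ F2 * τ}).toReal
      ≤ Real.exp ((d * τ) / 2) * Real.sqrt F2 ^ (d * r) *
        ∏ k, (F2 + σ k ^ 2) ^ (-(d : ℝ) / 2) := by
  have : Nonempty (Fin r) := ⟨⟨0, hr⟩⟩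
  have hF2pos : 0 < F2 := by
    rw [hF2]
    exact Finset.sum_pos (fun k _ => pow_pos (hσpos k) 2) Finset.univ_nonempty
  set t : ℝ := -(1 / (2 * F2)) with ht_def
  have ht : t ≤ 0 := by
    rw [ht_def]; simp only [neg_nonpos]; positivity
  set Y : Fin d × Fin r → Ω → ℝ := fun p ω => σ p.2 ^ 2 * ξ ω p ^ 2 with hY_def
  have hYmeas : ∀ p, Measurable (Y p) := fun p => ((hmeas p).pow_const 2).const_mul _
  have hYnonneg : ∀ p ω, 0 ≤ Y p ω := fun p ω => by positivity
  have hYindep : iIndepFun Y μ :=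
    hindep.comp (fun p x => σ p.2 ^ 2 * x ^ 2)
      (fun p => (measurable_id.pow_const 2).const_mul _)
  have hdpos : (0:ℝ) < d := Nat.cast_pos.mpr hd
  -- rewrite the event
  have hset : {ω | (d : ℝ)⁻¹ * ∑ i : Fin d, ∑ k, σ k ^ 2 * ξ ω (i, k) ^ 2 ≤ F2 * τ}
      = {ω | (∑ p : Fin d × Fin r, Y p) ω ≤ (d : ℝ) * (F2 * τ)} := by
    ext ω
    simp only [Set.mem_setOf_eq, Finset.sum_apply, hY_def]
    rw [Fintype.sum_prod_type, inv_mul_le_iff₀ hdpos]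
  -- integrability
  have hSmeas : Measurable (∑ p : Fin d × Fin r, Y p) := by
    have h : (∑ p : Fin d × Fin r, Y p) = fun ω => ∑ p : Fin d × Fin r, Y p ω := by
      ext ω; simp
    rw [h]
    exact Finset.measurable_sum _ fun p _ => hYmeas p
  have hSnonneg : ∀ ω, 0 ≤ (∑ p : Fin d × Fin r, Y p) ω := by
    intro ω
    rw [Finset.sum_apply]
    exact Finset.sum_nonneg fun p _ => hYnonneg p ω
  have hint : Integrable (fun ω => Real.exp (t * (∑ p : Fin d × Fin r, Y p) ω)) μ := by
    refine (integrable_const (1:ℝ)).mono' ((hSmeas.const_mul t).exp.aestronglyMeasurable) ?_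
    refine Filter.Eventually.of_forall fun ω => ?_
    rw [Real.norm_eq_abs, abs_of_pos (Real.exp_pos _)]
    exact Real.exp_le_one_iff.mpr (mul_nonpos_of_nonpos_of_nonneg ht (hSnonneg ω))
  have chern := measure_le_le_exp_mul_mgf (μ := μ) (X := ∑ p : Fin d × Fin r, Y p)
    ((d : ℝ) * (F2 * τ)) ht hint
  rw [hset]
  refine chern.trans ?_
  -- compute mgf
  rw [hYindep.mgf_sum hYmeas Finset.univ]
  have hfac : ∀ p : Fin d × Fin r,
      mgf (Y p) μ t = √F2 / √(F2 + σ p.2 ^ 2) := by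
    intro p
    have ha : (0:ℝ) ≤ σ p.2 ^ 2 / (2 * F2) := by positivity
    have hmi : Measurable fun x : ℝ => Real.exp (t * (σ p.2 ^ 2 * x ^ 2)) :=
      (((measurable_id.pow_const 2).const_mul _).const_mul t).exp
    have : mgf (Y p) μ t = ∫ x : ℝ, Real.exp (t * (σ p.2 ^ 2 * x ^ 2))
        ∂(Measure.map (fun ω => ξ ω p) μ) := by
      rw [integral_map (hmeas p).aemeasurable hmi.aestronglyMeasurable]
      rfl
    rw [this, hgauss p]
    have heq : ∀ x : ℝ, t * (σ p.2 ^ 2 * x ^ 2) = -(σ p.2 ^ 2 / (2 * F2)) * x ^ 2 := by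
      intro x; rw [ht_def]; field_simp
    simp_rw [heq]
    rw [gauss_sq_exp _ ha]
    have h2a : 1 + 2 * (σ p.2 ^ 2 / (2 * F2)) = (F2 + σ p.2 ^ 2) / F2 := by
      field_simp
    rw [h2a, Real.sqrt_div (by positivity) F2, inv_div]
  simp_rw [hfac]
  -- compute the product
  have hprod : (∏ p : Fin d × Fin r, √F2 / √(F2 + σ p.2 ^ 2))
      = ∏ k, (√F2 / √(F2 + σ k ^ 2)) ^ d := by
    rw [Fintype.prod_prod_type]
    simp [Finset.prod_pow]
    rw [div_pow]
  rw [hprod]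
  have hexp : -t * ((d : ℝ) * (F2 * τ)) = (d : ℝ) * τ / 2 := by
    rw [ht_def]; field_simp
  rw [hexp, mul_assoc]
  refine mul_le_mul_of_nonneg_left (le_of_eq ?_) (Real.exp_pos _).le
  have hkey : ∀ k : Fin r, (√F2 / √(F2 + σ k ^ 2)) ^ d
      = √F2 ^ d * (F2 + σ k ^ 2) ^ (-(d:ℝ) / 2) := by
    intro k
    have hx : (0:ℝ) < F2 + σ k ^ 2 := by positivity
    rw [div_pow, div_eq_mul_inv]
    congr 1
    rw [show -(d:ℝ)/2 = (1/2 : ℝ) * (-(d:ℝ)) by ring, Real.rpow_mul hx.le,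
      ← Real.sqrt_eq_rpow, Real.rpow_neg (Real.sqrt_nonneg _), Real.rpow_natCast]
  simp_rw [hkey]
  rw [Finset.prod_mul_distrib, Finset.prod_const, Finset.card_univ, Fintype.card_fin,
    ← pow_mul]
end

section
/- Let σ₁ ≥ ... ≥ σ_r > 0 with r ≥ 2, F² = σ₁²+...+σ_r², and define ν_k = ln(1/(1 − σ_k²/F²)). Then Σ_{k=1}^r ν_k ≤ 1/(1−α) where α = σ₁²/F² is the ratio of the largest squared singular value to the squared Frobenius norm. -/
/-- Chord inequality for `-log(1-x)` on `[0, α]`, from concavity of `log`. -/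
lemma chord_log {α x : ℝ} (hα0 : 0 < α) (hα1 : α < 1) (hx0 : 0 ≤ x) (hxα : x ≤ α) :
    -Real.log (1 - x) ≤ (x / α) * (-Real.log (1 - α)) := by
  have ht0 : 0 ≤ x / α := div_nonneg hx0 hα0.le
  have ht1 : x / α ≤ 1 := (div_le_one hα0).mpr hxα
  have h1α : (0:ℝ) < 1 - α := by linarith
  have hcomb : (x / α) • (1 - α) + (1 - x / α) • (1:ℝ) = 1 - x := by
    field_simp
    linear_combination (1 - x) * mul_inv_cancel₀ hα0.ne'
  have hb0 : (0:ℝ) ≤ 1 - x / α := by linarith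
  have hab : x / α + (1 - x / α) = 1 := by ring
  have hcc := strictConcaveOn_log_Ioi.concaveOn.2 (x := 1 - α) (y := (1:ℝ))
    (Set.mem_Ioi.mpr h1α) (Set.mem_Ioi.mpr one_pos) ht0 hb0 hab
  rw [hcomb] at hcc
  simp only [smul_eq_mul, Real.log_one, mul_zero, add_zero] at hcc
  linarith

/-- for `σ₁ ≥ ⋯ ≥ σ_r > 0` with `r ≥ 2`, `F² = σ₁²+⋯+σ_r²` and
`ν_k = ln(1/(1 − σ_k²/F²))`, one has `Σ_k ν_k ≤ 1/(1−α)` where `α = σ₁²/F²`. -/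
theorem stmt_10 {r : ℕ} (hr : 2 ≤ r)
    (σ : Fin r → ℝ) (hσpos : ∀ k, 0 < σ k) (hσmono : Antitone σ)
    (F2 : ℝ) (hF2 : F2 = ∑ k, σ k ^ 2)
    (α : ℝ) (hα : α = σ ⟨0, by omega⟩ ^ 2 / F2) :
    ∑ k, Real.log (1 / (1 - σ k ^ 2 / F2)) ≤ 1 / (1 - α) := by
  have h0 : (⟨0, by omega⟩ : Fin r) ∈ (Finset.univ : Finset (Fin r)) := Finset.mem_univ _
  have hF2pos : 0 < F2 := by
    rw [hF2]
    exact Finset.sum_pos (fun k _ => pow_pos (hσpos k) 2) ⟨⟨0, by omega⟩, h0⟩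
  have hlt : σ ⟨0, by omega⟩ ^ 2 < F2 := by
    rw [hF2]
    refine Finset.single_lt_sum (i := (⟨0, by omega⟩ : Fin r)) (j := (⟨1, by omega⟩ : Fin r))
      ?_ (Finset.mem_univ _) (Finset.mem_univ _) (pow_pos (hσpos _) 2)
      (fun k _ _ => (pow_pos (hσpos k) 2).le)
    simp [Fin.ext_iff]
  have hα0 : 0 < α := by rw [hα]; exact div_pos (pow_pos (hσpos _) 2) hF2pos
  have hα1 : α < 1 := by rw [hα]; exact (div_lt_one hF2pos).mpr hlt
  have h1α : (0:ℝ) < 1 - α := by linarith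
  have hxle : ∀ k : Fin r, σ k ^ 2 / F2 ≤ α := by
    intro k
    rw [hα]
    have hle : (⟨0, by omega⟩ : Fin r) ≤ k := Fin.mk_le_of_le_val (Nat.zero_le _)
    gcongr
    exacts [(hσpos k).le, hσmono hle]
  -- rewrite each term and apply the chord inequality
  have hstep : ∀ k : Fin r, Real.log (1 / (1 - σ k ^ 2 / F2))
      ≤ (σ k ^ 2 / F2 / α) * (-Real.log (1 - α)) := by
    intro k
    have hx0 : 0 ≤ σ k ^ 2 / F2 := by positivity
    have h := chord_log hα0 hα1 hx0 (hxle k)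
    have h1x : (0:ℝ) < 1 - σ k ^ 2 / F2 := by
      have := (hxle k); linarith
    rwa [one_div, Real.log_inv]
  have hsum : ∑ k, (σ k ^ 2 / F2 / α) * (-Real.log (1 - α))
      = (1 / α) * (-Real.log (1 - α)) := by
    rw [← Finset.sum_mul]
    congr 1
    have : ∑ k : Fin r, σ k ^ 2 / F2 / α = (∑ k : Fin r, σ k ^ 2) / F2 / α := by
      rw [Finset.sum_div, Finset.sum_div]
    rw [this, ← hF2, div_self hF2pos.ne', one_div]
  calc ∑ k, Real.log (1 / (1 - σ k ^ 2 / F2))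
      ≤ ∑ k, (σ k ^ 2 / F2 / α) * (-Real.log (1 - α)) :=
        Finset.sum_le_sum fun k _ => hstep k
    _ = (1 / α) * (-Real.log (1 - α)) := hsum
    _ ≤ (1 / α) * (α / (1 - α)) := by
        apply mul_le_mul_of_nonneg_left ?_ (by positivity)
        have h := Real.log_le_sub_one_of_pos (x := 1 / (1 - α)) (by positivity)
        rw [one_div, Real.log_inv] at h
        have he : α / (1 - α) = (1 - α)⁻¹ - 1 := by field_simp; ring
        linarith
    _ = 1 / (1 - α) := by field_simp
end

section
/- Let σ₁ ≥ ... ≥ σ_r > 0 with r ≥ 2, F² = Σσ_k², X̄_d the average of d i.i.d. copies of X = Σσ_k²ξ_k² (ξ_k i.i.d. N(0,1)). If τ > 1 + σ₁²/(F² − σ₁²), then P[X̄_d ≥ F²τ] ≤ exp(−(d/2)(τ − C)) for the constant C = Σ_k ln(1/(1−σ_k²/F²)) < τ; in particular the tail probability decays exponentially in d. -/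
open MeasureTheory ProbabilityTheory

open Real in
lemma gauss_exp_key {a : ℝ} (ha : a < 1/2) :
    Integrable (fun x => Real.exp (a * x ^ 2)) (gaussianReal 0 1) ∧
    ∫ x, Real.exp (a * x ^ 2) ∂(gaussianReal 0 1) = (Real.sqrt (1 - 2*a))⁻¹ := by
  have hb : (0:ℝ) < 1/2 - a := by linarith
  have hg : gaussianReal 0 1 = volume.withDensity
      (fun x => ((Real.toNNReal (gaussianPDFReal 0 1 x) : NNReal) : ENNReal)) := by
    rw [gaussianReal_of_var_ne_zero _ one_ne_zero]
    rfl
  have hmeas : Measurable fun x => Real.toNNReal (gaussianPDFReal 0 1 x) :=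
    (measurable_gaussianPDFReal 0 1).real_toNNReal
  have hfun : ∀ x : ℝ, Real.toNNReal (gaussianPDFReal 0 1 x) • Real.exp (a * x ^ 2)
      = (Real.sqrt (2 * π))⁻¹ * Real.exp (-(1/2 - a) * x ^ 2) := by
    intro x
    rw [NNReal.smul_def, smul_eq_mul, Real.coe_toNNReal _ (gaussianPDFReal_nonneg 0 1 x)]
    simp only [gaussianPDFReal, NNReal.coe_one, mul_one, sub_zero]
    rw [mul_assoc, ← Real.exp_add]
    ring_nf
  have hint : Integrable (fun x => (Real.sqrt (2 * π))⁻¹ * Real.exp (-(1/2 - a) * x ^ 2)) :=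
    (integrable_exp_neg_mul_sq hb).const_mul _
  constructor
  · rw [hg, integrable_withDensity_iff_integrable_smul hmeas]
    exact hint.congr (Filter.Eventually.of_forall fun x => (hfun x).symm)
  · rw [hg, integral_withDensity_eq_integral_smul hmeas]
    simp_rw [hfun]
    rw [integral_const_mul, integral_gaussian]
    have h1 : Real.sqrt (π / (1/2 - a)) = Real.sqrt (2*π) * (Real.sqrt (1-2*a))⁻¹ := by
      rw [← Real.sqrt_inv, ← Real.sqrt_mul (by positivity)]
      congr 1
      field_simp
    rw [h1, ← mul_assoc, inv_mul_cancel₀ (ne_of_gt (Real.sqrt_pos.mpr (by positivity))), one_mul]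

/-- exponential decay of the upper tail: with `F² = Σ_k σ_k²`, `r ≥ 2`,
and `X̄_d` the average of `d` i.i.d. copies of `X = Σ_k σ_k² ξ_k²`, if
`τ > 1 + σ₁²/(F² − σ₁²)` then, with `C = Σ_k ln(1/(1−σ_k²/F²))`, one has `C < τ` and
`P[X̄_d ≥ F²τ] ≤ exp(−(d/2)(τ − C))`. -/
theorem stmt_12 {Ω : Type*} [MeasurableSpace Ω]
    (μ : Measure Ω) [IsProbabilityMeasure μ]
    {r d : ℕ} (hr : 2 ≤ r) (hd : 0 < d)
    (σ : Fin r → ℝ) (hσpos : ∀ k, 0 < σ k) (hσmono : Antitone σ)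
    (ξ : Ω → Fin d × Fin r → ℝ)
    (hmeas : ∀ p, Measurable fun ω => ξ ω p)
    (hgauss : ∀ p, Measure.map (fun ω => ξ ω p) μ = gaussianReal 0 1)
    (hindep : iIndepFun (fun p ω => ξ ω p) μ)
    (F2 : ℝ) (hF2 : F2 = ∑ k, σ k ^ 2)
    (C : ℝ) (hC : C = ∑ k, Real.log (1 / (1 - σ k ^ 2 / F2)))
    (τ : ℝ) (hτ : 1 + σ ⟨0, by omega⟩ ^ 2 / (F2 - σ ⟨0, by omega⟩ ^ 2) < τ) :
    C < τ ∧
    (μ {ω | F2 * τ ≤ (d : ℝ)⁻¹ * ∑ i : Fin d, ∑ k, σ k ^ 2 * ξ ω (i, k) ^ 2}).toReal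
      ≤ Real.exp (-((d : ℝ) / 2) * (τ - C)) := by
  have k0 : Fin r := ⟨0, by omega⟩
  have hF2pos : 0 < F2 := by
    rw [hF2]
    exact Finset.sum_pos (fun k _ => pow_pos (hσpos k) 2) ⟨⟨0, by omega⟩, Finset.mem_univ _⟩
  have hF2ne : F2 ≠ 0 := ne_of_gt hF2pos
  -- each σ k ^ 2 < F2
  have hlt : ∀ k : Fin r, σ k ^ 2 < F2 := by
    intro k
    rw [hF2]
    rcases eq_or_ne k ⟨0, by omega⟩ with hk | hk
    · exact Finset.single_lt_sum (by simp [hk, Fin.ext_iff] : (⟨1, by omega⟩ : Fin r) ≠ k)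
        (Finset.mem_univ _) (Finset.mem_univ _) (pow_pos (hσpos _) 2)
        (fun j _ _ => (pow_pos (hσpos j) 2).le)
    · exact Finset.single_lt_sum (Ne.symm hk) (Finset.mem_univ _) (Finset.mem_univ _)
        (pow_pos (hσpos _) 2) (fun j _ _ => (pow_pos (hσpos j) 2).le)
  have hpos1 : ∀ k : Fin r, 0 < 1 - σ k ^ 2 / F2 := by
    intro k
    have := hlt k
    rw [sub_pos, div_lt_one hF2pos]
    exact this
  have hσ0 : ∀ k : Fin r, σ k ^ 2 ≤ σ ⟨0, by omega⟩ ^ 2 := fun k =>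
    pow_le_pow_left₀ (hσpos k).le (hσmono (by simp [Fin.le_def])) 2
  have hs1F : σ (⟨0, by omega⟩ : Fin r) ^ 2 < F2 := hlt _
  have hCτ : C < τ := by
    have hb : ∀ k : Fin r, Real.log (1 / (1 - σ k ^ 2 / F2))
        ≤ (σ k ^ 2 / F2) / (1 - σ (⟨0, by omega⟩ : Fin r) ^ 2 / F2) := by
      intro k
      have h01 : 0 < 1 - σ (⟨0, by omega⟩ : Fin r) ^ 2 / F2 := hpos1 _
      have h0k : 0 < 1 - σ k ^ 2 / F2 := hpos1 k
      have step1 : Real.log (1 / (1 - σ k ^ 2 / F2)) ≤ (σ k ^ 2 / F2) / (1 - σ k ^ 2 / F2) := by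
        have hne : F2 - σ k ^ 2 ≠ 0 := by have := hlt k; linarith
        have := Real.log_le_sub_one_of_pos (one_div_pos.mpr h0k)
        calc Real.log (1 / (1 - σ k ^ 2 / F2)) ≤ 1 / (1 - σ k ^ 2 / F2) - 1 := this
          _ = (σ k ^ 2 / F2) / (1 - σ k ^ 2 / F2) := by field_simp; ring
      refine step1.trans ?_
      have hkk : σ k ^ 2 / F2 ≤ σ (⟨0, by omega⟩ : Fin r) ^ 2 / F2 :=
        (div_le_div_iff_of_pos_right hF2pos).mpr (hσ0 k)
      exact div_le_div_of_nonneg_left (by positivity) h01 (by linarith)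
    have hsum : C ≤ (∑ k, σ k ^ 2 / F2) / (1 - σ (⟨0, by omega⟩ : Fin r) ^ 2 / F2) := by
      rw [hC, Finset.sum_div]
      exact Finset.sum_le_sum fun k _ => hb k
    have h1 : (∑ k, σ k ^ 2 / F2) = 1 := by
      rw [← Finset.sum_div, ← hF2, div_self hF2ne]
    rw [h1] at hsum
    have h2 : 1 / (1 - σ (⟨0, by omega⟩ : Fin r) ^ 2 / F2)
        = 1 + σ (⟨0, by omega⟩ : Fin r) ^ 2 / (F2 - σ (⟨0, by omega⟩ : Fin r) ^ 2) := by
      have hden : F2 - σ (⟨0, by omega⟩ : Fin r) ^ 2 ≠ 0 := by linarith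
      field_simp
      ring
    rw [h2] at hsum
    exact lt_of_le_of_lt hsum hτ
  refine ⟨hCτ, ?_⟩
  -- Part 2 : Chernoff
  set Y : Fin d × Fin r → Ω → ℝ := fun p ω => σ p.2 ^ 2 * ξ ω p ^ 2 with hY
  have hYmeas : ∀ p, Measurable (Y p) := fun p => ((hmeas p).pow_const 2).const_mul _
  have hYindep : iIndepFun Y μ :=
    hindep.comp (fun p x => σ p.2 ^ 2 * x ^ 2)
      (fun p => (measurable_id.pow_const 2).const_mul _)
  set t : ℝ := (2 * F2)⁻¹ with ht
  have htpos : 0 < t := by positivity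
  have key : ∀ p : Fin d × Fin r, Integrable (fun ω => Real.exp (t * Y p ω)) μ ∧
      mgf (Y p) μ t = (Real.sqrt (1 - σ p.2 ^ 2 / F2))⁻¹ := by
    intro p
    set a : ℝ := σ p.2 ^ 2 * t with ha'
    have ha : a < 1/2 := by
      rw [ha', ht]
      rw [mul_inv_lt_iff₀ (by positivity)]
      have := hlt p.2
      linarith
    have h2a : 1 - 2 * a = 1 - σ p.2 ^ 2 / F2 := by
      rw [ha', ht]
      field_simp
    obtain ⟨hi, hv⟩ := gauss_exp_key ha
    rw [← hgauss p] at hi hv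
    have hcomp : (fun ω => Real.exp (t * Y p ω))
        = (fun x => Real.exp (a * x ^ 2)) ∘ (fun ω => ξ ω p) := by
      funext ω
      simp only [hY, Function.comp_apply, ha']
      ring_nf
    have hm : AEStronglyMeasurable (fun x : ℝ => Real.exp (a * x ^ 2))
        (Measure.map (fun ω => ξ ω p) μ) :=
      (Measurable.aestronglyMeasurable (by measurability))
    have hint : Integrable (fun ω => Real.exp (t * Y p ω)) μ := by
      rw [hcomp]
      exact (integrable_map_measure hm (hmeas p).aemeasurable).mp hi
    refine ⟨hint, ?_⟩
    rw [mgf]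
    calc μ[fun ω => Real.exp (t * Y p ω)]
        = ∫ x, Real.exp (a * x ^ 2) ∂(Measure.map (fun ω => ξ ω p) μ) := by
          rw [integral_map (hmeas p).aemeasurable hm, hcomp]
          rfl
      _ = (Real.sqrt (1 - 2*a))⁻¹ := hv
      _ = (Real.sqrt (1 - σ p.2 ^ 2 / F2))⁻¹ := by rw [h2a]
  have hIntSum : Integrable (fun ω => Real.exp (t * (∑ p, Y p) ω)) μ :=
    hYindep.integrable_exp_mul_sum hYmeas (fun p _ => (key p).1)
  have hmgf : mgf (∑ p, Y p) μ t = ∏ p : Fin d × Fin r, (Real.sqrt (1 - σ p.2 ^ 2 / F2))⁻¹ := by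
    rw [hYindep.mgf_sum hYmeas]
    exact Finset.prod_congr rfl fun p _ => (key p).2
  have hch := measure_ge_le_exp_mul_mgf (X := ∑ p, Y p) (μ := μ) (↑d * (F2 * τ))
    htpos.le hIntSum
  rw [hmgf] at hch
  -- rewrite the set
  have hset : {ω | F2 * τ ≤ (d : ℝ)⁻¹ * ∑ i : Fin d, ∑ k, σ k ^ 2 * ξ ω (i, k) ^ 2}
      = {ω | ↑d * (F2 * τ) ≤ (∑ p, Y p) ω} := by
    ext ω
    simp only [Set.mem_setOf_eq, Finset.sum_apply, hY, Fintype.sum_prod_type]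
    have hdpos : (0:ℝ) < d := by exact_mod_cast hd
    rw [inv_mul_eq_div, le_div_iff₀ hdpos, mul_comm]
  rw [hset]
  refine hch.trans (le_of_eq ?_)
  -- compute the RHS
  have hprod : (∏ p : Fin d × Fin r, (Real.sqrt (1 - σ p.2 ^ 2 / F2))⁻¹)
      = Real.exp (↑d * C / 2) := by
    have heach : ∀ k : Fin r, (Real.sqrt (1 - σ k ^ 2 / F2))⁻¹
        = Real.exp (Real.log (1 / (1 - σ k ^ 2 / F2)) / 2) := by
      intro k
      have h0 := hpos1 k
      rw [one_div, Real.log_inv, neg_div, Real.exp_neg]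
      congr 1
      rw [← Real.log_sqrt h0.le, Real.exp_log (Real.sqrt_pos.mpr h0)]
    calc (∏ p : Fin d × Fin r, (Real.sqrt (1 - σ p.2 ^ 2 / F2))⁻¹)
        = ∏ p : Fin d × Fin r, Real.exp (Real.log (1 / (1 - σ p.2 ^ 2 / F2)) / 2) :=
          Finset.prod_congr rfl fun p _ => heach p.2
      _ = Real.exp (∑ p : Fin d × Fin r, Real.log (1 / (1 - σ p.2 ^ 2 / F2)) / 2) :=
          (Real.exp_sum _ _).symm
      _ = Real.exp (↑d * C / 2) := by
          congr 1
          rw [Fintype.sum_prod_type]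
          simp only [← Finset.sum_div, ← hC]
          rw [Finset.sum_const, Finset.card_univ, Fintype.card_fin, nsmul_eq_mul]
  rw [hprod, ← Real.exp_add]
  congr 1
  rw [ht]
  field_simp
  ring
end

section
/- Let σ₁ ≥ ... ≥ σ_r > 0, F² = Σσ_k², X̄_d the average of d i.i.d. copies of X = Σσ_k²ξ_k² (ξ_k i.i.d. N(0,1)). If 0 ≤ τ < ln 2, then P[X̄_d ≤ F²τ] ≤ exp(−(d/2)(C − τ)) where C = Σ_k ln(1 + σ_k²/F²) ≥ ln 2 > τ; in particular the lower tail probability decays exponentially in d. -/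
open MeasureTheory ProbabilityTheory

open Real in
open scoped ENNReal NNReal in
lemma integral_exp_mul_sq_gaussian {a : ℝ} (ha : a < 1/2) :
    ∫ x, Real.exp (a * x ^ 2) ∂(gaussianReal 0 1) = (Real.sqrt (1 - 2*a))⁻¹ := by
  rw [gaussianReal_of_var_ne_zero 0 one_ne_zero]
  have hpdf : gaussianPDF 0 1 = fun x => ((gaussianPDFReal 0 1 x).toNNReal : ℝ≥0∞) := rfl
  rw [hpdf, integral_withDensity_eq_integral_smul
    (measurable_gaussianPDFReal 0 1).real_toNNReal]
  have h1 : ∀ x : ℝ, ((gaussianPDFReal 0 1 x).toNNReal : ℝ≥0) • Real.exp (a * x ^ 2)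
      = (Real.sqrt (2 * π))⁻¹ * Real.exp (-(1/2 - a) * x ^ 2) := by
    intro x
    rw [NNReal.smul_def, smul_eq_mul, Real.coe_toNNReal _ (gaussianPDFReal_nonneg 0 1 x),
      gaussianPDFReal]
    push_cast
    rw [mul_one, mul_assoc, ← Real.exp_add]
    ring_nf
  simp_rw [h1]
  rw [integral_const_mul, integral_gaussian]
  have hb : (0:ℝ) < 1/2 - a := by linarith
  have h2a : (0:ℝ) < 1 - 2*a := by linarith
  rw [← Real.sqrt_inv, ← Real.sqrt_mul (by positivity)]
  rw [← Real.sqrt_inv]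
  congr 1
  have hπ := Real.pi_ne_zero
  field_simp

/-- exponential decay of the lower tail: with `F² = Σ_k σ_k²` and `X̄_d`
the average of `d` i.i.d. copies of `X = Σ_k σ_k² ξ_k²`, if `0 ≤ τ < ln 2` then, with
`C = Σ_k ln(1+σ_k²/F²)`, one has `ln 2 ≤ C` (so `τ < C`) and
`P[X̄_d ≤ F²τ] ≤ exp(−(d/2)(C − τ))`. -/
theorem stmt_13 {Ω : Type*} [MeasurableSpace Ω]
    (μ : Measure Ω) [IsProbabilityMeasure μ]
    {r d : ℕ} (hr : 0 < r) (hd : 0 < d)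
    (σ : Fin r → ℝ) (hσpos : ∀ k, 0 < σ k) (hσmono : Antitone σ)
    (ξ : Ω → Fin d × Fin r → ℝ)
    (hmeas : ∀ p, Measurable fun ω => ξ ω p)
    (hgauss : ∀ p, Measure.map (fun ω => ξ ω p) μ = gaussianReal 0 1)
    (hindep : iIndepFun (fun p ω => ξ ω p) μ)
    (F2 : ℝ) (hF2 : F2 = ∑ k, σ k ^ 2)
    (C : ℝ) (hC : C = ∑ k, Real.log (1 + σ k ^ 2 / F2))
    (τ : ℝ) (hτ0 : 0 ≤ τ) (hτ1 : τ < Real.log 2) :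
    Real.log 2 ≤ C ∧ τ < C ∧
    (μ {ω | (d : ℝ)⁻¹ * ∑ i : Fin d, ∑ k, σ k ^ 2 * ξ ω (i, k) ^ 2 ≤ F2 * τ}).toReal
      ≤ Real.exp (-((d : ℝ) / 2) * (C - τ)) := by
  have : Nonempty (Fin r) := ⟨⟨0, hr⟩⟩
  have hF2pos : 0 < F2 := by
    rw [hF2]
    exact Finset.sum_pos (fun k _ => pow_pos (hσpos k) 2) Finset.univ_nonempty
  -- Part 1 : log 2 ≤ C
  have hkey : ∀ x : ℝ, 0 ≤ x → x ≤ 1 → x * Real.log 2 ≤ Real.log (1 + x) := by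
    intro x hx0 hx1
    have hconv := convexOn_exp.2 (Set.mem_univ (0:ℝ)) (Set.mem_univ (Real.log 2))
      (by linarith : (0:ℝ) ≤ 1 - x) hx0 (by ring)
    simp only [smul_eq_mul, mul_zero, zero_add, Real.exp_zero, mul_one,
      Real.exp_log two_pos] at hconv
    rw [← Real.log_exp (x * Real.log 2)]
    exact Real.log_le_log (Real.exp_pos _) (by linarith)
  have hsum1 : ∑ k, σ k ^ 2 / F2 = 1 := by
    rw [← Finset.sum_div, ← hF2, div_self hF2pos.ne']
  have h1 : Real.log 2 ≤ C := by
    rw [hC]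
    calc Real.log 2 = ∑ k, σ k ^ 2 / F2 * Real.log 2 := by
          rw [← Finset.sum_mul, hsum1, one_mul]
      _ ≤ ∑ k, Real.log (1 + σ k ^ 2 / F2) := by
          refine Finset.sum_le_sum fun k _ => hkey _ (by positivity) ?_
          rw [div_le_one hF2pos, hF2]
          exact Finset.single_le_sum (fun j _ => sq_nonneg (σ j)) (Finset.mem_univ k)
  refine ⟨h1, lt_of_lt_of_le hτ1 h1, ?_⟩
  -- Part 3 : Chernoff bound
  set t : ℝ := -(1 / (2 * F2)) with ht_def
  have ht_le : t ≤ 0 := by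
    rw [ht_def]; simp only [neg_nonpos]; positivity
  set X : Fin d × Fin r → Ω → ℝ := fun p ω => σ p.2 ^ 2 * ξ ω p ^ 2 with hX_def
  have hXmeas : ∀ p, Measurable (X p) := fun p => ((hmeas p).pow_const 2).const_mul _
  have hXnonneg : ∀ p ω, 0 ≤ X p ω := fun p ω => by positivity
  have hXindep : iIndepFun X μ :=
    hindep.comp (fun p x => σ p.2 ^ 2 * x ^ 2)
      (fun p => (measurable_id.pow_const 2).const_mul _)
  have hSmeas : Measurable (∑ p, X p) := by
    have hfun : (∑ p, X p) = fun ω => ∑ p, X p ω := by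
      ext ω; simp [Finset.sum_apply]
    rw [hfun]
    exact Finset.measurable_sum _ fun p _ => hXmeas p
  have hInt : Integrable (fun ω => Real.exp (t * (∑ p, X p) ω)) μ := by
    refine Integrable.mono' (integrable_const (1:ℝ))
      ((hSmeas.const_mul t).exp.aestronglyMeasurable) (ae_of_all _ fun ω => ?_)
    rw [Real.norm_eq_abs, abs_of_pos (Real.exp_pos _)]
    refine Real.exp_le_one_iff.mpr (mul_nonpos_of_nonpos_of_nonneg ht_le ?_)
    rw [Finset.sum_apply]
    exact Finset.sum_nonneg fun p _ => hXnonneg p ω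
  have hchern := measure_le_le_exp_mul_mgf (X := ∑ p, X p) (μ := μ)
    ((d : ℝ) * (F2 * τ)) ht_le hInt
  -- identify the event
  have hset : {ω | (d : ℝ)⁻¹ * ∑ i : Fin d, ∑ k, σ k ^ 2 * ξ ω (i, k) ^ 2 ≤ F2 * τ}
      = {ω | (∑ p, X p) ω ≤ (d : ℝ) * (F2 * τ)} := by
    ext ω
    simp only [Set.mem_setOf_eq, Finset.sum_apply, hX_def]
    rw [Fintype.sum_prod_type, inv_mul_le_iff₀ (by exact_mod_cast hd : (0:ℝ) < (d:ℝ))]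
  -- compute each mgf
  have hone : ∀ p : Fin d × Fin r,
      mgf (X p) μ t = Real.exp (-(Real.log (1 + σ p.2 ^ 2 / F2) / 2)) := by
    intro p
    have ha : t * σ p.2 ^ 2 < 1 / 2 := by
      have : t * σ p.2 ^ 2 ≤ 0 :=
        mul_nonpos_of_nonpos_of_nonneg ht_le (sq_nonneg _)
      exact lt_of_le_of_lt this (by norm_num)
    have hmap : ∫ ω, Real.exp (t * X p ω) ∂μ
        = ∫ x, Real.exp (t * σ p.2 ^ 2 * x ^ 2) ∂(gaussianReal 0 1) := by
      rw [← hgauss p, integral_map (hmeas p).aemeasurable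
        (((measurable_id'.pow_const 2).const_mul (t * σ p.2 ^ 2)).exp.aestronglyMeasurable)]
      simp only [hX_def]
      congr 1 with ω
      ring_nf
    have hval : 1 - 2 * (t * σ p.2 ^ 2) = 1 + σ p.2 ^ 2 / F2 := by
      rw [ht_def]; field_simp; ring
    have hy : (0:ℝ) < 1 + σ p.2 ^ 2 / F2 := by positivity
    rw [mgf, hmap, integral_exp_mul_sq_gaussian ha, hval,
      show Real.sqrt (1 + σ p.2 ^ 2 / F2) = Real.exp (Real.log (1 + σ p.2 ^ 2 / F2) / 2) by
        rw [← Real.log_sqrt hy.le, Real.exp_log (Real.sqrt_pos.mpr hy)],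
      ← Real.exp_neg]
  have hmgf : mgf (∑ p, X p) μ t = Real.exp (-((d : ℝ) / 2) * C) := by
    rw [hXindep.mgf_sum hXmeas]
    simp_rw [hone]
    rw [← Real.exp_sum, Fintype.sum_prod_type]
    have hS : ∑ k, -(Real.log (1 + σ k ^ 2 / F2) / 2) = -(C / 2) := by
      rw [hC, Finset.sum_div]
      exact Finset.sum_neg_distrib (f := fun k => Real.log (1 + σ k ^ 2 / F2) / 2)
    congr 1
    dsimp only
    rw [hS, Finset.sum_const, Finset.card_univ, Fintype.card_fin, nsmul_eq_mul]
    ring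
  rw [hset]
  refine hchern.trans (le_of_eq ?_)
  rw [hmgf, ← Real.exp_add]
  congr 1
  rw [ht_def]
  field_simp
  ring
end
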